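/- Let R be an algebraic curvature tensor on V = Σ ⊕ Σ^⊥ with nonnegative sectional curvature and R(z,u)z = 0 for all z ∈ Σ, u ∈ Σ^⊥. Let {x_i} be an orthonormal basis of Σ and {u_k} an orthonormal basis of Σ^⊥. Then ∑_{i,j,k,l} ⟨R(x_i,x_j)u_k, u_l⟩² ≤ (4/9) (∑_{i,j} ⟨R(x_i,x_j)x_j, x_i⟩) · (∑_{k,l} ⟨R(u_k,u_l)u_l, u_k⟩). -/

import Mathlib

open scoped RealInnerProductSpace


private lemma quad_aux {K₀ K₁ A : ℝ} (hK₀ : 0 ≤ K₀) (hK₁ : 0 ≤ K₁) (hA : 0 ≤ A)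
    (hQ : ∀ t : ℝ, 0 ≤ K₀ - 3 * A * t ^ 2 + K₁ * t ^ 4) :
    9 * A ^ 2 ≤ 4 * K₀ * K₁ := by
  have h : ∀ s : ℝ, 0 ≤ K₁ * (s * s) + (-(3 * A)) * s + K₀ := by
    intro s
    rcases le_or_gt 0 s with hs | hs
    · have h1 := hQ (Real.sqrt s)
      rw [show Real.sqrt s ^ 4 = (Real.sqrt s ^ 2) ^ 2 by ring, Real.sq_sqrt hs] at h1
      nlinarith [h1]
    · nlinarith [mul_nonneg hK₁ (sq_nonneg s), mul_nonneg hA (neg_nonneg.mpr hs.le)]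
  have h2 := discrim_le_zero (a := K₁) (b := -(3 * A)) (c := K₀) h
  rw [discrim] at h2
  nlinarith [h2]

private lemma bzero {B c : ℝ} (hf : ∀ t : ℝ, 0 ≤ 2 * B * t + c * t ^ 2) : B = 0 := by
  have h : ∀ t : ℝ, 0 ≤ c * (t * t) + (2 * B) * t + 0 := by intro t; have := hf t; linarith
  have h2 := discrim_le_zero (a := c) (b := 2 * B) (c := 0) h
  rw [discrim] at h2
  nlinarith [sq_nonneg B]

private lemma expand_ineq {V : Type*} [NormedAddCommGroup V] [InnerProductSpace ℝ V]
    (Sig : Submodule ℝ V) (R : V →ₗ[ℝ] V →ₗ[ℝ] V →ₗ[ℝ] V)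
    (hanti1 : ∀ x y, R x y = - R y x)
    (hanti2 : ∀ x y z w, ⟪R x y z, w⟫ = - ⟪R x y w, z⟫)
    (hpair : ∀ x y z w, ⟪R x y z, w⟫ = ⟪R z w x, y⟫)
    (hbianchi : ∀ x y z, R x y z + R y z x + R z x y = 0)
    (hnonneg : ∀ x y, 0 ≤ ⟪R x y y, x⟫)
    (hflat : ∀ z ∈ Sig, ∀ u ∈ Sigᗮ, R z u z = 0)
    {x y u v : V} (hx : x ∈ Sig) (hy : y ∈ Sig) (hu : u ∈ Sigᗮ) (hv : v ∈ Sigᗮ) :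
    ∀ t : ℝ, 0 ≤ ⟪R x y y, x⟫ - 3 * ⟪R x y u, v⟫ * t ^ 2 + ⟪R u v v, u⟫ * t ^ 4 := by
  -- zero for repeated first two arguments, scalar version
  have hzero : ∀ w c d : V, ⟪R w w c, d⟫ = 0 := by
    intro w c d
    have h : ⟪R w w c, d⟫ = - ⟪R w w c, d⟫ := by
      nth_rewrite 1 [hanti1 w w]
      simp
    linarith
  -- polarized flatness
  have h1 : ∀ a ∈ Sig, ∀ b ∈ Sig, ∀ w ∈ Sigᗮ, R a w b = - R b w a := by
    intro a ha b hb w hw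
    have h := hflat (a + b) (Sig.add_mem ha hb) w hw
    simp only [map_add, LinearMap.add_apply] at h
    rw [hflat a ha w hw, hflat b hb w hw] at h
    exact eq_neg_of_add_eq_zero_right (by simpa using h)
  -- the analytic vanishing: ⟪R z a a, b⟫ = 0 for z ∈ Σ, a b ∈ Σᗮ
  have h3 : ∀ z ∈ Sig, ∀ a ∈ Sigᗮ, ∀ b ∈ Sigᗮ, ⟪R z a a, b⟫ = 0 := by
    intro z hz a ha b hb
    have hzz : ⟪R z a a, z⟫ = 0 := by
      rw [hanti2, hflat z hz a ha]; simp
    have hsym : ⟪R b a a, z⟫ = ⟪R z a a, b⟫ := by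
      rw [hanti2 b a a z, hpair b a z a, hanti2 z a b a]; ring
    refine bzero (c := ⟪R b a a, b⟫) ?_
    intro t
    have h0 := hnonneg (z + t • b) a
    simp only [map_add, map_smul, LinearMap.add_apply, LinearMap.smul_apply,
      inner_add_left, inner_add_right, real_inner_smul_left, real_inner_smul_right,
      smul_eq_mul] at h0
    rw [hzz, hsym] at h0
    nlinarith [h0]
  -- three Σᗮ one Σ, repeated middle
  have q : ∀ a ∈ Sigᗮ, ∀ b ∈ Sigᗮ, ∀ z ∈ Sig, ⟪R a b b, z⟫ = 0 := by
    intro a ha b hb z hz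
    rw [hpair a b b z, hanti1 b z]
    simp only [LinearMap.neg_apply, inner_neg_left]
    rw [hanti2 z b a b, h3 z hz b hb a ha]
    simp
  -- antisymmetry of middle two args when first in Σᗮ, tested against Σ
  have q2 : ∀ a ∈ Sigᗮ, ∀ b ∈ Sigᗮ, ∀ c ∈ Sigᗮ, ∀ z ∈ Sig,
      ⟪R a b c, z⟫ = - ⟪R a c b, z⟫ := by
    intro a ha b hb c hc z hz
    have h := q a ha (b + c) (Submodule.add_mem _ hb hc) z hz
    simp only [map_add, LinearMap.add_apply, inner_add_left] at h
    rw [q a ha b hb z hz, q a ha c hc z hz] at h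
    linarith
  -- key relation from Bianchi: ⟪R x' y' u', w⟫ = 2 ⟪R x' u' y', w⟫
  have h5 : ∀ x' ∈ Sig, ∀ y' ∈ Sig, ∀ u' ∈ Sigᗮ, ∀ w : V,
      ⟪R x' y' u', w⟫ = 2 * ⟪R x' u' y', w⟫ := by
    intro x' hx' y' hy' u' hu' w
    have hi := congrArg (fun z => ⟪z, w⟫) (hbianchi x' y' u')
    simp only [inner_add_left] at hi
    rw [h1 y' hy' x' hx' u' hu', hanti1 u' x'] at hi
    simp only [LinearMap.neg_apply, inner_neg_left, inner_zero_left] at hi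
    linarith
  set A := ⟪R x y u, v⟫ with hA
  set K₀ := ⟪R x y y, x⟫ with hK₀
  set K₁ := ⟪R u v v, u⟫ with hK₁
  have e1 : ⟪R u y y, x⟫ = 0 := by
    rw [hanti1 u y]
    simp only [LinearMap.neg_apply, inner_neg_left]
    rw [hflat y hy u hu]; simp
  have e2 : ⟪R x v y, x⟫ = 0 := by
    rw [hanti2 x v y x, hflat x hx v hv]; simp
  have e3 : ⟪R x y v, x⟫ = 0 := by
    rw [hanti2 x y v x, hpair x y x v, hflat x hx v hv]; simp
  have e4 : ⟪R x y y, u⟫ = 0 := by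
    rw [hpair x y y u, h1 y hy x hx u hu]
    simp only [LinearMap.neg_apply, inner_neg_left]
    have := hanti2 x u y y
    linarith
  have e5 : ⟪R u v y, x⟫ = - A := by
    rw [hpair u v y x, hanti1 y x]
    simp [hA]
  have e10 : ⟪R x y v, u⟫ = - A := by
    rw [hanti2 x y v u, hA]
  have e9 : ⟪R x v y, u⟫ = - A / 2 := by
    have h := h5 x hx y hy v hv u
    rw [e10] at h
    linarith
  have e6 : ⟪R u y v, x⟫ = - A / 2 := by
    rw [hpair u y v x, hanti1 v x]
    simp only [LinearMap.neg_apply, inner_neg_left]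
    rw [hanti2 x v u y]
    rw [e9]; ring
  have e7 : ⟪R u y y, u⟫ = 0 := by
    rw [hanti1 u y]
    simp only [LinearMap.neg_apply, inner_neg_left]
    rw [hflat y hy u hu]; simp
  have e8 : ⟪R x v v, x⟫ = 0 := by
    rw [hanti2 x v v x, hflat x hx v hv]; simp
  have e11 : ⟪R u v v, x⟫ = 0 := q u hu v hv x hx
  have e12 : ⟪R u v y, u⟫ = 0 := by
    rw [hanti2 u v y u, q2 u hu v hv u hu y hy, hzero]
    simp
  have e13 : ⟪R u y v, u⟫ = 0 := by
    rw [hpair u y v u, hanti1 v u]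
    simp only [LinearMap.neg_apply, inner_neg_left]
    rw [q2 u hu v hv u hu y hy, hzero]
    simp
  have e14 : ⟪R x v v, u⟫ = 0 := h3 x hx v hv u hu
  intro t
  have h0 := hnonneg (x + t • u) (y + t • v)
  have hexp : ⟪R (x + t • u) (y + t • v) (y + t • v), x + t • u⟫
      = K₀ - 3 * A * t ^ 2 + K₁ * t ^ 4 := by
    simp only [map_add, map_smul, LinearMap.add_apply, LinearMap.smul_apply,
      inner_add_left, inner_add_right, real_inner_smul_left, real_inner_smul_right,
      smul_eq_mul]
    linear_combination (norm := ring_nf) t * e1 + t * e2 + t * e3 + t * e4 + t ^ 2 * e5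
      + t ^ 2 * e6 + t ^ 2 * e7 + t ^ 2 * e8 + t ^ 2 * e9 + t ^ 2 * e10
      + t ^ 3 * (e11 + e12 + e13 + e14) - hK₀ - t ^ 4 * hK₁
  rw [hexp] at h0
  exact h0

private lemma pointwise {V : Type*} [NormedAddCommGroup V] [InnerProductSpace ℝ V]
    (Sig : Submodule ℝ V) (R : V →ₗ[ℝ] V →ₗ[ℝ] V →ₗ[ℝ] V)
    (hanti1 : ∀ x y, R x y = - R y x)
    (hanti2 : ∀ x y z w, ⟪R x y z, w⟫ = - ⟪R x y w, z⟫)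
    (hpair : ∀ x y z w, ⟪R x y z, w⟫ = ⟪R z w x, y⟫)
    (hbianchi : ∀ x y z, R x y z + R y z x + R z x y = 0)
    (hnonneg : ∀ x y, 0 ≤ ⟪R x y y, x⟫)
    (hflat : ∀ z ∈ Sig, ∀ u ∈ Sigᗮ, R z u z = 0)
    {x y u v : V} (hx : x ∈ Sig) (hy : y ∈ Sig) (hu : u ∈ Sigᗮ) (hv : v ∈ Sigᗮ) :
    ⟪R x y u, v⟫ ^ 2 ≤ 4 / 9 * ⟪R x y y, x⟫ * ⟪R u v v, u⟫ := by
  have hQ := expand_ineq Sig R hanti1 hanti2 hpair hbianchi hnonneg hflat hx hy hu hv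
  have hQ' := expand_ineq Sig R hanti1 hanti2 hpair hbianchi hnonneg hflat hx hy
    (Submodule.neg_mem _ hu) hv
  simp only [map_neg, LinearMap.neg_apply, inner_neg_left, inner_neg_right, neg_neg,
    mul_neg, neg_mul, sub_neg_eq_add] at hQ'
  have hK₀ := hnonneg x y
  have hK₁ := hnonneg u v
  rcases le_total 0 (⟪R x y u, v⟫) with hA | hA
  · have := quad_aux hK₀ hK₁ hA hQ
    nlinarith
  · have := quad_aux (A := -⟪R x y u, v⟫) hK₀ hK₁ (by linarith)
      (fun t => by nlinarith [hQ' t])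
    nlinarith

/-- Summing the pointwise inequality ⟪R(x,y)y,x⟫⟪R(u,v)v,u⟫ ≥ (9/4)⟪R(x,y)u,v⟫² over
orthonormal bases x of Σ and u of Σᗮ: the squared norm of the mixed curvature is bounded
by (4/9) times the product of the tangential and normal scalar curvature sums. -/
theorem stmt13 {V : Type*} [NormedAddCommGroup V] [InnerProductSpace ℝ V] [FiniteDimensional ℝ V] (Sig : Submodule ℝ V)
    (R : V →ₗ[ℝ] V →ₗ[ℝ] V →ₗ[ℝ] V)
    (hanti1 : ∀ x y, R x y = - R y x)
    (hanti2 : ∀ x y z w, ⟪R x y z, w⟫ = - ⟪R x y w, z⟫)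
    (hpair : ∀ x y z w, ⟪R x y z, w⟫ = ⟪R z w x, y⟫)
    (hbianchi : ∀ x y z, R x y z + R y z x + R z x y = 0)
    (hnonneg : ∀ x y, 0 ≤ ⟪R x y y, x⟫)
    (hflat : ∀ z ∈ Sig, ∀ u ∈ Sigᗮ, R z u z = 0)
    {m p : ℕ} (x : Fin m → V) (hxo : Orthonormal ℝ x) (hxS : ∀ i, x i ∈ Sig)
    (hxspan : Submodule.span ℝ (Set.range x) = Sig)
    (u : Fin p → V) (huo : Orthonormal ℝ u) (huS : ∀ k, u k ∈ Sigᗮ)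
    (huspan : Submodule.span ℝ (Set.range u) = Sigᗮ) :
    ∑ i : Fin m, ∑ j : Fin m, ∑ k : Fin p, ∑ l : Fin p, ⟪R (x i) (x j) (u k), u l⟫ ^ 2 ≤
      (4 / 9 : ℝ) * (∑ i : Fin m, ∑ j : Fin m, ⟪R (x i) (x j) (x j), x i⟫) *
        (∑ k : Fin p, ∑ l : Fin p, ⟪R (u k) (u l) (u l), u k⟫) := by
  have key : ∀ (i j : Fin m) (k l : Fin p),
      ⟪R (x i) (x j) (u k), u l⟫ ^ 2 ≤
        4 / 9 * ⟪R (x i) (x j) (x j), x i⟫ * ⟪R (u k) (u l) (u l), u k⟫ :=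
    fun i j k l => pointwise Sig R hanti1 hanti2 hpair hbianchi hnonneg hflat
      (hxS i) (hxS j) (huS k) (huS l)
  calc ∑ i : Fin m, ∑ j : Fin m, ∑ k : Fin p, ∑ l : Fin p, ⟪R (x i) (x j) (u k), u l⟫ ^ 2
      ≤ ∑ i : Fin m, ∑ j : Fin m, ∑ k : Fin p, ∑ l : Fin p,
        4 / 9 * ⟪R (x i) (x j) (x j), x i⟫ * ⟪R (u k) (u l) (u l), u k⟫ := by
        refine Finset.sum_le_sum fun i _ => Finset.sum_le_sum fun j _ =>
          Finset.sum_le_sum fun k _ => Finset.sum_le_sum fun l _ => key i j k l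
    _ = (4 / 9 : ℝ) * (∑ i : Fin m, ∑ j : Fin m, ⟪R (x i) (x j) (x j), x i⟫) *
        (∑ k : Fin p, ∑ l : Fin p, ⟪R (u k) (u l) (u l), u k⟫) := by
        simp only [← Finset.mul_sum, ← Finset.sum_mul]
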